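/- arXiv:0905.3293 — 5 statements merged into one kernel-verified Lean document; each statement's English description precedes it below -/
import Mathlib

section
/- Let t_1, …, t_n ∈ K^× and let t = diag(t_1, …, t_n) ∈ GL_n(K). Set x = (x_1, …, x_n) ∈ ℝ^n with x_i = −v(t_i). Then the tropical stabilizer {g ∈ SL_n(K) : g_trop · x = x} is exactly the conjugate subgroup t · SL_n(O_K) · t^{−1}. -/
open Classical

/-- The tropicalization `-v(a) = log |a|` of a field element, with `-v(0) = -∞`. -/
noncomputable def tropEntry {K : Type*} [Field K] (v : AbsoluteValue K ℝ) (a : K) : EReal :=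
  if a = 0 then ⊥ else ((Real.log (v a) : ℝ) : EReal)

/-- The tropicalized linear action of a matrix: `(g_trop · x)_i = max_j (-v(g_{ij}) + x_j)`. -/
noncomputable def tropAct {K : Type*} [Field K] {n : ℕ} (v : AbsoluteValue K ℝ)
    (g : Matrix (Fin n) (Fin n) K) (x : Fin n → EReal) : Fin n → EReal :=
  fun i => ⨆ j, tropEntry v (g i j) + x j

lemma nonarch_sum' {K : Type*} [Field K] (v : AbsoluteValue K ℝ) (hna : IsNonarchimedean (⇑v))
    {ι : Type*} (s : Finset ι) (f : ι → K) (C : ℝ) (hC : 0 ≤ C)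
    (h : ∀ i ∈ s, v (f i) ≤ C) : v (∑ i ∈ s, f i) ≤ C := by
  classical
  induction s using Finset.induction with
  | empty => simpa using hC
  | insert a s hx ih =>
      rw [Finset.sum_insert hx]
      exact le_trans (hna _ _) (max_le (h _ (Finset.mem_insert_self _ _))
        (ih fun i hi => h i (Finset.mem_insert_of_mem hi)))

lemma row_max' {K : Type*} [Field K] (v : AbsoluteValue K ℝ) (hna : IsNonarchimedean (⇑v))
    {n : ℕ} (s : Matrix (Fin n) (Fin n) K) (hdet : s.det = 1)
    (hle : ∀ i j, v (s i j) ≤ 1) (i : Fin n) : ∃ j, v (s i j) = 1 := by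
  by_contra h
  push_neg at h
  have hlt : ∀ j, v (s i j) < 1 := fun j => lt_of_le_of_ne (hle i j) (h j)
  have hne : (Finset.univ : Finset (Fin n)).Nonempty := ⟨i, Finset.mem_univ i⟩
  set c := Finset.univ.sup' hne (fun j => v (s i j)) with hc
  have hc1 : c < 1 := (Finset.sup'_lt_iff hne).2 fun j _ => hlt j
  have hlec : ∀ j, v (s i j) ≤ c := fun j =>
    Finset.le_sup' (f := fun j => v (s i j)) (Finset.mem_univ j)
  have hc0 : 0 ≤ c := le_trans (v.nonneg (s i i)) (hlec i)
  have hterm : ∀ σ : Equiv.Perm (Fin n),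
      v (((Equiv.Perm.sign σ : ℤ) : K) * ∏ j, s (σ j) j) ≤ c := by
    intro σ
    have hsgn : v ((Equiv.Perm.sign σ : ℤ) : K) = 1 := by
      rcases Int.units_eq_one_or (Equiv.Perm.sign σ) with h1 | h1 <;> simp [h1]
    rw [v.map_mul, hsgn, one_mul, map_prod]
    set j0 := σ.symm i with hj0
    calc ∏ j, v (s (σ j) j)
        = v (s (σ j0) j0) * ∏ j ∈ Finset.univ.erase j0, v (s (σ j) j) :=
          (Finset.mul_prod_erase _ _ (Finset.mem_univ j0)).symm
      _ ≤ v (s (σ j0) j0) * 1 := by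
          apply mul_le_mul_of_nonneg_left _ (v.nonneg _)
          exact Finset.prod_le_one (fun j _ => v.nonneg _) (fun j _ => hle _ _)
      _ = v (s i j0) := by rw [mul_one, hj0, Equiv.apply_symm_apply]
      _ ≤ c := hlec j0
  have hvd : v s.det ≤ c := by
    rw [Matrix.det_apply']
    exact nonarch_sum' v hna _ _ c hc0 (fun σ _ => hterm σ)
  rw [hdet, v.map_one] at hvd
  exact absurd (lt_of_le_of_lt hvd hc1) (lt_irrefl 1)

/-- For a point `x` of the apartment whose coordinates `x_i = -v(t_i)` lie in the value group,
the tropical stabilizer of `x` in `SL_n(K)` is the conjugate `t · SL_n(O_K) · t⁻¹` of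
`SL_n(O_K)` by the diagonal matrix `t = diag(t_1, …, t_n)`. -/
theorem tropical_stabilizer_eq_conjugate_of_integral_points
    {K : Type*} [Field K] {n : ℕ} (v : AbsoluteValue K ℝ)
    (hna : IsNonarchimedean (⇑v))
    (hnontriv : ∃ a : K, a ≠ 0 ∧ v a ≠ 1)
    (t : Fin n → K) (ht : ∀ i, t i ≠ 0)
    (x : Fin n → ℝ) (hx : ∀ i, x i = Real.log (v (t i))) :
    {g : Matrix (Fin n) (Fin n) K | g.det = 1 ∧
        tropAct v g (fun i => ((x i : ℝ) : EReal)) = fun i => ((x i : ℝ) : EReal)}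
      = (fun s => Matrix.diagonal t * s * (Matrix.diagonal t)⁻¹) ''
        {s : Matrix (Fin n) (Fin n) K | s.det = 1 ∧ ∀ i j, v (s i j) ≤ 1} := by
  have hvt : ∀ i, 0 < v (t i) := fun i => v.pos (ht i)
  have hdne : (Matrix.diagonal t).det ≠ 0 := by
    rw [Matrix.det_diagonal]
    exact Finset.prod_ne_zero_iff.2 fun i _ => ht i
  have hDu : IsUnit (Matrix.diagonal t).det := Ne.isUnit hdne
  have hinv : (Matrix.diagonal t)⁻¹ = Matrix.diagonal (fun i => (t i)⁻¹) := by
    have h1 : (fun i => t i * (t i)⁻¹) = fun _ => (1:K) := funext fun i => mul_inv_cancel₀ (ht i)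
    exact Matrix.inv_eq_right_inv (by rw [Matrix.diagonal_mul_diagonal]
                                      rw [h1, Matrix.diagonal_one])
  ext g
  simp only [Set.mem_setOf_eq, Set.mem_image]
  constructor
  · rintro ⟨hdet, hact⟩
    have hentry : ∀ i j, ((Matrix.diagonal t)⁻¹ * g * Matrix.diagonal t) i j
        = (t i)⁻¹ * g i j * t j := by
      intro i j
      rw [hinv, Matrix.mul_diagonal, Matrix.diagonal_mul]
    have h1 : ∀ i j, tropEntry v (g i j) + ((x j : ℝ) : EReal) ≤ ((x i : ℝ) : EReal) := by
      intro i j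
      have hci := congrFun hact i
      simp only [tropAct] at hci
      rw [← hci]
      exact le_iSup (fun j => tropEntry v (g i j) + ((x j : ℝ) : EReal)) j
    refine ⟨(Matrix.diagonal t)⁻¹ * g * Matrix.diagonal t, ⟨?_, ?_⟩, ?_⟩
    · rw [Matrix.det_mul, Matrix.det_mul, Matrix.det_nonsing_inv, hdet,
        Ring.inverse_eq_inv, mul_one, inv_mul_cancel₀ hdne]
    · intro i j
      rw [hentry]
      by_cases hg : g i j = 0
      · simp [hg]
      · have h2 := h1 i j
        rw [tropEntry, if_neg hg, ← EReal.coe_add, EReal.coe_le_coe_iff] at h2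
        rw [hx i, hx j] at h2
        rw [← Real.log_mul (ne_of_gt (v.pos hg)) (ne_of_gt (hvt j))] at h2
        have h4 : v (g i j) * v (t j) ≤ v (t i) :=
          (Real.log_le_log_iff (mul_pos (v.pos hg) (hvt j)) (hvt i)).1 h2
        have h5 : (v (t i))⁻¹ * (v (g i j) * v (t j)) ≤ (v (t i))⁻¹ * v (t i) :=
          mul_le_mul_of_nonneg_left h4 (inv_nonneg.2 (le_of_lt (hvt i)))
        rw [inv_mul_cancel₀ (ne_of_gt (hvt i))] at h5
        rw [v.map_mul, v.map_mul, map_inv₀]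
        rw [mul_assoc]
        exact h5
    · show Matrix.diagonal t * ((Matrix.diagonal t)⁻¹ * g * Matrix.diagonal t) *
          (Matrix.diagonal t)⁻¹ = g
      rw [Matrix.mul_assoc, Matrix.mul_assoc, Matrix.mul_assoc,
        Matrix.mul_nonsing_inv _ hDu, Matrix.mul_one, ← Matrix.mul_assoc,
        Matrix.mul_nonsing_inv _ hDu, Matrix.one_mul]
  · rintro ⟨s, ⟨hsdet, hsle⟩, rfl⟩
    have hentry : ∀ i j, (Matrix.diagonal t * s * (Matrix.diagonal t)⁻¹) i j
        = t i * s i j * (t j)⁻¹ := by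
      intro i j
      rw [hinv, Matrix.mul_diagonal, Matrix.diagonal_mul]
    constructor
    · rw [Matrix.det_mul, Matrix.det_mul, Matrix.det_nonsing_inv, hsdet,
        Ring.inverse_eq_inv, mul_one, mul_inv_cancel₀ hdne]
    · funext i
      simp only [tropAct]
      obtain ⟨j0, hj0⟩ := row_max' v hna s hsdet hsle i
      apply le_antisymm
      · apply iSup_le
        intro j
        by_cases hs : s i j = 0
        · have h0 : (Matrix.diagonal t * s * (Matrix.diagonal t)⁻¹) i j = 0 := by
            rw [hentry, hs, mul_zero, zero_mul]
          rw [h0, tropEntry, if_pos rfl, EReal.bot_add]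
          exact bot_le
        · have hgne : (Matrix.diagonal t * s * (Matrix.diagonal t)⁻¹) i j ≠ 0 := by
            rw [hentry]
            exact mul_ne_zero (mul_ne_zero (ht i) hs) (inv_ne_zero (ht j))
          rw [tropEntry, if_neg hgne, hentry, ← EReal.coe_add, EReal.coe_le_coe_iff]
          rw [v.map_mul, v.map_mul, map_inv₀, hx i, hx j,
            Real.log_mul (mul_ne_zero (ne_of_gt (hvt i)) (ne_of_gt (v.pos hs)))
              (inv_ne_zero (ne_of_gt (hvt j))),
            Real.log_mul (ne_of_gt (hvt i)) (ne_of_gt (v.pos hs)), Real.log_inv]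
          have hlog : Real.log (v (s i j)) ≤ 0 := Real.log_nonpos (v.nonneg _) (hsle i j)
          linarith
      · have hsne : s i j0 ≠ 0 := by
          intro h0
          rw [h0, v.map_zero] at hj0
          norm_num at hj0
        have hgne : (Matrix.diagonal t * s * (Matrix.diagonal t)⁻¹) i j0 ≠ 0 := by
          rw [hentry]
          exact mul_ne_zero (mul_ne_zero (ht i) hsne) (inv_ne_zero (ht j0))
        have key : tropEntry v ((Matrix.diagonal t * s * (Matrix.diagonal t)⁻¹) i j0)
            + ((x j0 : ℝ) : EReal) = ((x i : ℝ) : EReal) := by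
          rw [tropEntry, if_neg hgne, hentry, ← EReal.coe_add, EReal.coe_eq_coe_iff]
          rw [v.map_mul, v.map_mul, map_inv₀, hj0, mul_one, hx i, hx j0,
            Real.log_mul (ne_of_gt (hvt i)) (inv_ne_zero (ne_of_gt (hvt j0))),
            Real.log_inv]
          ring
        rw [← key]
        exact le_iSup (fun j => tropEntry v ((Matrix.diagonal t * s * (Matrix.diagonal t)⁻¹) i j)
          + ((x j : ℝ) : EReal)) j0
end

section
/- For every point x = (x_1, …, x_n) ∈ ℝ^n, the set {g ∈ SL_n(K) : g_trop · x = x} is a subgroup of SL_n(K), i.e., it contains the identity matrix and is closed under matrix multiplication and inversion. -/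
open Classical

section Aux

variable {K : Type*} [Field K] (v : AbsoluteValue K ℝ)

lemma tropAux_add_le_iff (a : K) (s t : ℝ) :
    tropEntry v a + ((s : ℝ) : EReal) ≤ ((t : ℝ) : EReal) ↔ v a ≤ Real.exp (t - s) := by
  by_cases ha : a = 0
  · simp [tropEntry, ha, EReal.bot_add, bot_le, (Real.exp_pos _).le]
  · rw [tropEntry, if_neg ha, ← EReal.coe_add, EReal.coe_le_coe_iff,
      ← sub_nonneg, show t - (Real.log (v a) + s) = (t - s) - Real.log (v a) by ring, sub_nonneg,
      Real.log_le_iff_le_exp (v.pos ha)]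

lemma tropAux_add_lt_iff (a : K) (s t : ℝ) :
    tropEntry v a + ((s : ℝ) : EReal) < ((t : ℝ) : EReal) ↔ v a < Real.exp (t - s) := by
  by_cases ha : a = 0
  · simp [tropEntry, ha, EReal.bot_add, EReal.bot_lt_coe, Real.exp_pos]
  · rw [tropEntry, if_neg ha, ← EReal.coe_add, EReal.coe_lt_coe_iff,
      ← sub_pos, show t - (Real.log (v a) + s) = (t - s) - Real.log (v a) by ring, sub_pos,
      Real.log_lt_iff_lt_exp (v.pos ha)]

lemma tropAux_nonarch_sum (hna : IsNonarchimedean (⇑v)) {ι : Type*} (s : Finset ι)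
    (hs : s.Nonempty) (f : ι → K) : ∃ b ∈ s, v (∑ i ∈ s, f i) ≤ v (f b) := by
  classical
  induction s using Finset.cons_induction with
  | empty => exact absurd hs (by simp)
  | cons a s ha ih =>
    rcases s.eq_empty_or_nonempty with rfl | hs'
    · exact ⟨a, by simp, by simp⟩
    · obtain ⟨b, hb, hvb⟩ := ih hs'
      rw [Finset.sum_cons]
      rcases le_max_iff.mp (hna (f a) (∑ i ∈ s, f i)) with h | h
      · exact ⟨a, Finset.mem_cons_self a s, h⟩
      · exact ⟨b, Finset.mem_cons.mpr (Or.inr hb), h.trans hvb⟩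

lemma tropAux_sign_abs {σ : Equiv.Perm (Fin n)} : v (((Equiv.Perm.sign σ : ℤ) : K)) = 1 := by
  rcases Int.units_eq_one_or (Equiv.Perm.sign σ) with h | h <;>
    simp [h, v.map_neg, v.map_one]

variable {n : ℕ} (x : Fin n → ℝ)

lemma tropAux_exp_prod (σ : Equiv.Perm (Fin n)) :
    ∏ k, Real.exp (x (σ k) - x k) = 1 := by
  rw [← Real.exp_sum, Finset.sum_sub_distrib, Equiv.sum_comp σ x, sub_self, Real.exp_zero]

lemma tropAux_exp_prod_erase (σ : Equiv.Perm (Fin n)) (i : Fin n) :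
    ∏ k ∈ Finset.univ.erase i, Real.exp (x (σ k) - x k) = Real.exp (x i - x (σ i)) := by
  have h := Finset.mul_prod_erase Finset.univ (fun k => Real.exp (x (σ k) - x k))
    (Finset.mem_univ i)
  rw [tropAux_exp_prod x σ] at h
  rw [show x i - x (σ i) = -(x (σ i) - x i) by ring, Real.exp_neg]
  exact eq_inv_of_mul_eq_one_left (by rw [mul_comm]; exact h)

/-- If `g` has determinant `1` and all its entries satisfy the lattice-stabilizer bound
`v (g i j) ≤ exp (x i - x j)`, then `g` tropically fixes `x`. -/
lemma tropAux_mem_of_cond (hna : IsNonarchimedean (⇑v)) (g : Matrix (Fin n) (Fin n) K)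
    (hdet : g.det = 1) (hc : ∀ i j, v (g i j) ≤ Real.exp (x i - x j)) :
    tropAct v g (fun i => ((x i : ℝ) : EReal)) = fun i => ((x i : ℝ) : EReal) := by
  funext i
  refine le_antisymm (iSup_le fun j => (tropAux_add_le_iff v _ _ _).2 (hc i j)) ?_
  by_contra hlt
  rw [not_le] at hlt
  have hstrict : ∀ j, v (g i j) < Real.exp (x i - x j) := fun j =>
    (tropAux_add_lt_iff v _ _ _).1 (lt_of_le_of_lt (le_iSup (fun j => tropEntry v (g i j) +
      ((x j : ℝ) : EReal)) j) hlt)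
  have hone : v g.det = 1 := by rw [hdet, map_one]
  have hne : (Finset.univ : Finset (Equiv.Perm (Fin n))).Nonempty :=
    ⟨1, Finset.mem_univ 1⟩
  rw [Matrix.det_apply'] at hone
  obtain ⟨σ, -, hσ⟩ := tropAux_nonarch_sum v hna Finset.univ hne
    (fun σ : Equiv.Perm (Fin n) => (((Equiv.Perm.sign σ : ℤ) : K)) * ∏ k, g (σ k) k)
  rw [hone] at hσ
  have hmul : v (((Equiv.Perm.sign σ : ℤ) : K) * ∏ k, g (σ k) k) = v (∏ k, g (σ k) k) := by
    rw [v.map_mul, tropAux_sign_abs, one_mul]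
  rw [hmul] at hσ
  set k₀ := σ⁻¹ i with hk₀
  have hσk₀ : σ k₀ = i := Equiv.apply_symm_apply σ i
  have hs : v (g (σ k₀) k₀) < Real.exp (x (σ k₀) - x k₀) := by
    rw [hσk₀]; exact hstrict k₀
  have hprod : v (∏ k, g (σ k) k) < 1 := by
    rw [v.map_prod, ← Finset.mul_prod_erase Finset.univ (fun k => v (g (σ k) k))
      (Finset.mem_univ k₀)]
    calc v (g (σ k₀) k₀) * ∏ k ∈ Finset.univ.erase k₀, v (g (σ k) k)
        ≤ v (g (σ k₀) k₀) * ∏ k ∈ Finset.univ.erase k₀, Real.exp (x (σ k) - x k) := by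
          refine mul_le_mul_of_nonneg_left ?_ (v.nonneg _)
          exact Finset.prod_le_prod (fun k _ => v.nonneg _) (fun k _ => hc (σ k) k)
      _ < Real.exp (x (σ k₀) - x k₀) * ∏ k ∈ Finset.univ.erase k₀, Real.exp (x (σ k) - x k) := by
          refine mul_lt_mul_of_pos_right hs ?_
          exact Finset.prod_pos fun k _ => Real.exp_pos _
      _ = ∏ k, Real.exp (x (σ k) - x k) :=
          Finset.mul_prod_erase Finset.univ (fun k => Real.exp (x (σ k) - x k))
            (Finset.mem_univ k₀)
      _ = 1 := tropAux_exp_prod x σ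
  exact absurd (hσ.trans_lt hprod) (by norm_num)

/-- A matrix that tropically fixes `x` satisfies the entrywise bound. -/
lemma tropAux_cond_of_mem (g : Matrix (Fin n) (Fin n) K)
    (hfix : tropAct v g (fun i => ((x i : ℝ) : EReal)) = fun i => ((x i : ℝ) : EReal)) :
    ∀ i j, v (g i j) ≤ Real.exp (x i - x j) := by
  intro i j
  have h := congrFun hfix i
  rw [tropAct] at h
  refine (tropAux_add_le_iff v _ _ _).1 ?_
  calc tropEntry v (g i j) + ((x j : ℝ) : EReal)
      ≤ ⨆ j, tropEntry v (g i j) + ((x j : ℝ) : EReal) :=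
        le_iSup (fun j => tropEntry v (g i j) + ((x j : ℝ) : EReal)) j
    _ = ((x i : ℝ) : EReal) := h

/-- The entrywise bound for the adjugate of a matrix satisfying the entrywise bound. -/
lemma tropAux_adjugate_cond (hna : IsNonarchimedean (⇑v)) (g : Matrix (Fin n) (Fin n) K)
    (hc : ∀ i j, v (g i j) ≤ Real.exp (x i - x j)) :
    ∀ i j, v (g.adjugate i j) ≤ Real.exp (x i - x j) := by
  intro i j
  rw [Matrix.adjugate_apply, Matrix.det_apply']
  set M := g.updateRow j (Pi.single i 1) with hM
  have hne : (Finset.univ : Finset (Equiv.Perm (Fin n))).Nonempty :=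
    ⟨1, Finset.mem_univ 1⟩
  obtain ⟨σ, -, hσ⟩ := tropAux_nonarch_sum v hna Finset.univ hne
    (fun σ : Equiv.Perm (Fin n) => (((Equiv.Perm.sign σ : ℤ) : K)) * ∏ k, M (σ k) k)
  refine hσ.trans ?_
  rw [v.map_mul, tropAux_sign_abs, one_mul]
  by_cases hcase : σ⁻¹ j = i
  · -- the permutation sends `i` to `j`
    have hσi : σ i = j := by rw [← hcase, show σ (σ⁻¹ j) = j from Equiv.apply_symm_apply σ j]
    have hfac : M (σ i) i = 1 := by
      rw [hσi, hM, Matrix.updateRow_self, Pi.single_eq_same]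
    rw [v.map_prod, ← Finset.mul_prod_erase Finset.univ (fun k => v (M (σ k) k))
      (Finset.mem_univ i), hfac, v.map_one, one_mul]
    calc ∏ k ∈ Finset.univ.erase i, v (M (σ k) k)
        ≤ ∏ k ∈ Finset.univ.erase i, Real.exp (x (σ k) - x k) := by
          refine Finset.prod_le_prod (fun k _ => v.nonneg _) (fun k hk => ?_)
          have hkne : k ≠ i := (Finset.mem_erase.mp hk).1
          have hσkne : σ k ≠ j := by
            intro hcontra
            exact hkne (σ.injective (hcontra.trans hσi.symm))
          rw [hM, Matrix.updateRow_ne hσkne]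
          exact hc (σ k) k
      _ = Real.exp (x i - x (σ i)) := tropAux_exp_prod_erase x σ i
      _ = Real.exp (x i - x j) := by rw [hσi]
  · -- the term vanishes
    have hfac : M (σ (σ⁻¹ j)) (σ⁻¹ j) = 0 := by
      rw [show σ (σ⁻¹ j) = j from Equiv.apply_symm_apply σ j, hM, Matrix.updateRow_self, Pi.single_eq_of_ne hcase]
    have hzero : ∏ k, M (σ k) k = 0 :=
      Finset.prod_eq_zero (Finset.mem_univ (σ⁻¹ j)) hfac
    rw [hzero, v.map_zero]
    exact (Real.exp_pos _).le

end Aux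

/-- For every point `x ∈ ℝ^n`, the tropical stabilizer
`{g ∈ SL_n(K) : g_trop · x = x}` is a subgroup of `SL_n(K)`: it contains the identity
matrix and is closed under matrix multiplication and inversion. -/
theorem tropical_stabilizer_is_subgroup
    {K : Type*} [Field K] {n : ℕ} (v : AbsoluteValue K ℝ)
    (hna : IsNonarchimedean (⇑v))
    (hnontriv : ∃ a : K, a ≠ 0 ∧ v a ≠ 1)
    (x : Fin n → ℝ)
    (S : Set (Matrix (Fin n) (Fin n) K))
    (hS : S = {g : Matrix (Fin n) (Fin n) K | g.det = 1 ∧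
        tropAct v g (fun i => ((x i : ℝ) : EReal)) = fun i => ((x i : ℝ) : EReal)}) :
    (1 : Matrix (Fin n) (Fin n) K) ∈ S ∧
    (∀ g ∈ S, ∀ h ∈ S, g * h ∈ S) ∧
    (∀ g ∈ S, g⁻¹ ∈ S) := by
  subst hS
  refine ⟨?_, ?_, ?_⟩
  · -- identity
    have hdet : (1 : Matrix (Fin n) (Fin n) K).det = 1 := Matrix.det_one
    refine ⟨hdet, tropAux_mem_of_cond v x hna 1 hdet fun i j => ?_⟩
    by_cases h : i = j
    · subst h
      rw [Matrix.one_apply_eq, v.map_one, sub_self, Real.exp_zero]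
    · rw [Matrix.one_apply_ne h, v.map_zero]
      exact (Real.exp_pos _).le
  · -- products
    rintro g ⟨hgdet, hgfix⟩ h ⟨hhdet, hhfix⟩
    have hcg := tropAux_cond_of_mem v x g hgfix
    have hch := tropAux_cond_of_mem v x h hhfix
    have hdet : (g * h).det = 1 := by rw [Matrix.det_mul, hgdet, hhdet, one_mul]
    refine ⟨hdet, tropAux_mem_of_cond v x hna (g * h) hdet fun i k => ?_⟩
    rw [Matrix.mul_apply]
    obtain ⟨j, -, hj⟩ := tropAux_nonarch_sum v hna Finset.univ ⟨i, Finset.mem_univ i⟩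
      (fun j => g i j * h j k)
    refine hj.trans ?_
    rw [v.map_mul]
    calc v (g i j) * v (h j k)
        ≤ Real.exp (x i - x j) * Real.exp (x j - x k) :=
          mul_le_mul (hcg i j) (hch j k) (v.nonneg _) (Real.exp_pos _).le
      _ = Real.exp (x i - x k) := by rw [← Real.exp_add]; ring_nf
  · -- inverses
    rintro g ⟨hgdet, hgfix⟩
    have hcg := tropAux_cond_of_mem v x g hgfix
    have hinv : g⁻¹ = g.adjugate := by
      rw [Matrix.inv_def, hgdet, Ring.inverse_one, one_smul]
    have hdet : g⁻¹.det = 1 := by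
      rw [Matrix.det_nonsing_inv, hgdet, Ring.inverse_one]
    refine ⟨hdet, tropAux_mem_of_cond v x hna g⁻¹ hdet fun i j => ?_⟩
    rw [hinv]
    exact tropAux_adjugate_cond v x hna g hcg i j
end

section
/- Let E ⊆ ℝ^n be a finite set, invariant under the coordinate-permutation action of the symmetric group S_n, such that all elements of E have the same coordinate sum, and let m ∈ E be a highest point of E. Let H = {x ∈ ℝ^n : x_1 + … + x_n = 0}. Then the collection of sets C(M) ∩ H, where M ranges over those elements of E for which C(M) has nonempty interior in ℝ^n, coincides with the collection of sets C(σ·m) ∩ H, where σ ranges over S_n. In other words, the maximal cells of the normal-fan complex of the polytope conv(E), restricted to H, are exactly the cones C_σ = {x ∈ H : ⟨σ·m, x⟩ ≥ ⟨N, x⟩ for all N ∈ E} for σ ∈ S_n. -/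
open scoped BigOperators

/-- `m` is a highest point of `E ⊆ ℝ^(n+1)`: for every `N ∈ E` the difference `m - N`
is a non-negative linear combination of the simple-root vectors `e_i - e_{i+1}`. -/
def IsHighestPoint {n : ℕ} (E : Finset (Fin (n + 1) → ℝ)) (m : Fin (n + 1) → ℝ) : Prop :=
  ∀ N ∈ E, ∃ c : Fin n → ℝ, (∀ i, 0 ≤ c i) ∧
    m - N = ∑ i, c i • (Pi.single i.castSucc (1 : ℝ) - Pi.single i.succ (1 : ℝ))

/-- The coordinate-permutation action of the symmetric group on `ℝ^(n+1)`. -/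
def permVec {n : ℕ} (σ : Equiv.Perm (Fin (n + 1))) (m : Fin (n + 1) → ℝ) :
    Fin (n + 1) → ℝ :=
  fun i => m (σ⁻¹ i)

lemma sum_permVec_mul {n : ℕ} (σ : Equiv.Perm (Fin (n + 1))) (N x : Fin (n + 1) → ℝ) :
    ∑ i, permVec σ N i * x i = ∑ i, N i * x (σ i) := by
  rw [← Equiv.sum_comp σ (fun i => permVec σ N i * x i)]
  simp [permVec]

/-- Dominance: if `y` is weakly decreasing then a highest point maximizes `⟨·, y⟩`. -/
lemma dominance_core {n : ℕ} {E : Finset (Fin (n + 1) → ℝ)} {m : Fin (n + 1) → ℝ}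
    (hhigh : IsHighestPoint E m) (y : Fin (n + 1) → ℝ)
    (hy : ∀ i : Fin n, y i.succ ≤ y i.castSucc) :
    ∀ N ∈ E, ∑ i, N i * y i ≤ ∑ i, m i * y i := by
  intro N hN
  obtain ⟨c, hc, heq⟩ := hhigh N hN
  have happ : ∀ j, m j - N j = ∑ i, c i * ((Pi.single i.castSucc (1:ℝ) : Fin (n+1) → ℝ) j
      - (Pi.single i.succ (1:ℝ) : Fin (n+1) → ℝ) j) := by
    intro j
    have h := congrFun heq j
    simpa [Finset.sum_apply, smul_eq_mul] using h
  have key : ∑ j, m j * y j - ∑ j, N j * y j = ∑ i, c i * (y i.castSucc - y i.succ) := by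
    rw [← Finset.sum_sub_distrib]
    calc ∑ j, (m j * y j - N j * y j)
        = ∑ j, (∑ i, c i * ((Pi.single i.castSucc (1:ℝ) : Fin (n+1) → ℝ) j
          - (Pi.single i.succ (1:ℝ) : Fin (n+1) → ℝ) j)) * y j := by
          refine Finset.sum_congr rfl fun j _ => ?_
          rw [← sub_mul, happ j]
      _ = ∑ i, ∑ j, c i * (((Pi.single i.castSucc (1:ℝ) : Fin (n+1) → ℝ) j
          - (Pi.single i.succ (1:ℝ) : Fin (n+1) → ℝ) j)) * y j := by
          rw [Finset.sum_comm]
          simp_rw [Finset.sum_mul]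
      _ = ∑ i, c i * (y i.castSucc - y i.succ) := by
          refine Finset.sum_congr rfl fun i _ => ?_
          simp [Pi.single_apply, sub_mul, mul_sub, ite_mul, Finset.mul_sum,
            Finset.sum_sub_distrib]
  have hnn : 0 ≤ ∑ i, c i * (y i.castSucc - y i.succ) :=
    Finset.sum_nonneg fun i _ => mul_nonneg (hc i) (sub_nonneg.2 (hy i))
  linarith [key, hnn]

/-- Permuted dominance: if `x ∘ σ` is weakly decreasing then `permVec σ m`
maximizes `⟨·, x⟩` over `E`. -/
lemma dominance_perm {n : ℕ} {E : Finset (Fin (n + 1) → ℝ)} {m : Fin (n + 1) → ℝ}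
    (hhigh : IsHighestPoint E m)
    (hperm : ∀ (σ : Equiv.Perm (Fin (n + 1))), ∀ N ∈ E, permVec σ N ∈ E)
    (σ : Equiv.Perm (Fin (n + 1))) (x : Fin (n + 1) → ℝ)
    (hx : ∀ i : Fin n, x (σ i.succ) ≤ x (σ i.castSucc)) :
    ∀ N ∈ E, ∑ i, N i * x i ≤ ∑ i, permVec σ m i * x i := by
  intro N hN
  have h1 : ∑ i, N i * x i = ∑ i, permVec σ⁻¹ N i * x (σ i) := by
    rw [← Equiv.sum_comp σ (fun i => N i * x i)]
    simp [permVec]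
  have h2 : ∑ i, permVec σ m i * x i = ∑ i, m i * x (σ i) := sum_permVec_mul σ m x
  have h3 := dominance_core hhigh (fun j => x (σ j)) hx (permVec σ⁻¹ N) (hperm σ⁻¹ N hN)
  linarith [h1, h2, h3]

/-- Let `E` be a finite `S_n`-invariant set whose elements all have the same coordinate
sum, with highest point `m ∈ E`, and let `H` be the hyperplane of coordinate-sum zero.
Then the collection of sets `C(M) ∩ H` over those `M ∈ E` for which the cone
`C(M) = {x : ⟨M, x⟩ ≥ ⟨N, x⟩ for all N ∈ E}` has nonempty interior coincides with the
collection of the sets `C(σ·m) ∩ H` for `σ ∈ S_n`: the maximal cells of the normal-fan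
complex restricted to `H` are exactly the cones attached to the `S_n`-orbit of `m`. -/
theorem maximal_cells_are_permuted_highest_weight_cones
    {n : ℕ} (E : Finset (Fin (n + 1) → ℝ))
    (hsum : ∃ s : ℝ, ∀ N ∈ E, ∑ i, N i = s)
    (hperm : ∀ (σ : Equiv.Perm (Fin (n + 1))), ∀ N ∈ E, permVec σ N ∈ E)
    (m : Fin (n + 1) → ℝ) (hm : m ∈ E) (hhigh : IsHighestPoint E m) :
    {S : Set (Fin (n + 1) → ℝ) | ∃ M ∈ E,
        (interior {x : Fin (n + 1) → ℝ |
            ∀ N ∈ E, ∑ i, N i * x i ≤ ∑ i, M i * x i}).Nonempty ∧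
        S = {x : Fin (n + 1) → ℝ |
            (∀ N ∈ E, ∑ i, N i * x i ≤ ∑ i, M i * x i) ∧ ∑ i, x i = 0}}
      = {S : Set (Fin (n + 1) → ℝ) | ∃ σ : Equiv.Perm (Fin (n + 1)),
          S = {x : Fin (n + 1) → ℝ |
            (∀ N ∈ E, ∑ i, N i * x i ≤ ∑ i, permVec σ m i * x i) ∧ ∑ i, x i = 0}} := by
  ext S
  simp only [Set.mem_setOf_eq]
  constructor
  · rintro ⟨M, hM, ⟨x, hx⟩, rfl⟩
    -- sort x decreasingly
    set σ : Equiv.Perm (Fin (n + 1)) := Tuple.sort (fun i => -x i) with hσ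
    have hmono : Monotone ((fun i => -x i) ∘ σ) := Tuple.monotone_sort (fun i => -x i)
    have hanti : ∀ i : Fin n, x (σ i.succ) ≤ x (σ i.castSucc) := by
      intro i
      have := hmono (Fin.castSucc_le_succ i)
      simpa using this
    have hdom := dominance_perm hhigh hperm σ x hanti
    have hxC : x ∈ {x : Fin (n + 1) → ℝ |
        ∀ N ∈ E, ∑ i, N i * x i ≤ ∑ i, M i * x i} := interior_subset hx
    have hσm : permVec σ m ∈ E := hperm σ m hm
    have heqx : ∑ i, M i * x i = ∑ i, permVec σ m i * x i :=
      le_antisymm (hdom M hM) (hxC (permVec σ m) hσm)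
    -- interior point argument: M = permVec σ m
    obtain ⟨r, hr, hball⟩ := Metric.isOpen_iff.1 isOpen_interior x hx
    set v : Fin (n + 1) → ℝ := fun i => M i - permVec σ m i with hv
    have hveq : ∀ i, v i = 0 := by
      by_contra hcon
      push_neg at hcon
      obtain ⟨i0, hi0⟩ := hcon
      have hs : 0 < ∑ i, v i ^ 2 := by
        refine Finset.sum_pos' (fun i _ => sq_nonneg _) ⟨i0, Finset.mem_univ _, ?_⟩
        positivity
      set B : ℝ := (∑ i, |v i|) + 1 with hB
      have hBpos : 0 < B := by
        have : 0 ≤ ∑ i, |v i| := Finset.sum_nonneg fun i _ => abs_nonneg _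
        linarith
      set ε : ℝ := r / (2 * B) with hε
      have hεpos : 0 < ε := by positivity
      set z : Fin (n + 1) → ℝ := fun i => x i - ε * v i with hz
      have hzball : z ∈ Metric.ball x r := by
        rw [Metric.mem_ball]
        refine (dist_pi_lt_iff hr).2 fun i => ?_
        have h1 : |v i| ≤ B := by
          have := Finset.single_le_sum (f := fun i => |v i|)
            (fun i _ => abs_nonneg _) (Finset.mem_univ i)
          linarith
        have hd : dist (z i) (x i) = ε * |v i| := by
          rw [Real.dist_eq]
          have hzx : z i - x i = -(ε * v i) := by simp only [hz]; ring
          rw [hzx, abs_neg, abs_mul, abs_of_pos hεpos]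
        rw [hd]
        have h3 : ε * B = r / 2 := by
          rw [hε, div_mul_eq_mul_div, mul_comm 2 B, ← div_div, mul_div_cancel_right₀ _ hBpos.ne']
        calc ε * |v i| ≤ ε * B := mul_le_mul_of_nonneg_left h1 hεpos.le
          _ = r / 2 := h3
          _ < r := by linarith
      have hzC : ∑ i, permVec σ m i * z i ≤ ∑ i, M i * z i :=
        (interior_subset (hball hzball)) (permVec σ m) hσm
      have hexp : ∑ i, M i * z i - ∑ i, permVec σ m i * z i
          = (∑ i, M i * x i - ∑ i, permVec σ m i * x i) - ε * ∑ i, v i ^ 2 := by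
        simp only [hz, hv]
        rw [Finset.mul_sum]
        rw [← Finset.sum_sub_distrib, ← Finset.sum_sub_distrib, ← Finset.sum_sub_distrib]
        refine Finset.sum_congr rfl fun i _ => ?_
        ring
      have : 0 ≤ -(ε * ∑ i, v i ^ 2) := by
        have := sub_nonneg.2 hzC
        rw [hexp] at this
        linarith [heqx]
      nlinarith
    have hMeq : M = permVec σ m := by
      funext i
      have := hveq i
      simp only [hv] at this
      linarith
    exact ⟨σ, by rw [← hMeq]⟩
  · rintro ⟨σ, rfl⟩
    refine ⟨permVec σ m, hperm σ m hm, ?_, rfl⟩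
    set x : Fin (n + 1) → ℝ := fun i => -((σ⁻¹ i : Fin (n + 1)) : ℝ) with hx
    refine ⟨x, ?_⟩
    rw [mem_interior]
    refine ⟨Metric.ball x (1/2), ?_, Metric.isOpen_ball, Metric.mem_ball_self (by norm_num)⟩
    intro z hz
    have hclose : ∀ j : Fin (n + 1), |z (σ j) + (j : ℝ)| < 1/2 := by
      intro j
      have h1 : dist (z (σ j)) (x (σ j)) ≤ dist z x := dist_le_pi_dist z x (σ j)
      have h2 : dist z x < 1/2 := Metric.mem_ball.1 hz
      have h3 : x (σ j) = -(j : ℝ) := by simp [hx]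
      rw [Real.dist_eq, h3] at h1
      calc |z (σ j) + (j : ℝ)| = |z (σ j) - (-(j:ℝ))| := by ring_nf
        _ ≤ dist z x := h1
        _ < 1/2 := h2
    have hanti : ∀ i : Fin n, z (σ i.succ) ≤ z (σ i.castSucc) := by
      intro i
      have h1 := abs_lt.1 (hclose i.succ)
      have h2 := abs_lt.1 (hclose i.castSucc)
      have hs : ((i.succ : Fin (n+1)) : ℝ) = ((i.castSucc : Fin (n+1)) : ℝ) + 1 := by
        simp [Fin.val_succ, Fin.coe_castSucc]
      rw [hs] at h1
      linarith [h1.1, h1.2, h2.1, h2.2]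
    exact fun N hN => dominance_perm hhigh hperm σ z hanti N hN
end

section
/- Let E ⊆ ℝ^n be a finite set and let m ∈ E be a highest point of E. Assume moreover that for every i ∈ {1, …, n−1} the vector m − (e_i − e_{i+1}) belongs to E. Then {x ∈ ℝ^n : x_1 + … + x_n = 0 and ⟨m, x⟩ ≥ ⟨N, x⟩ for all N ∈ E} = {x ∈ ℝ^n : x_1 + … + x_n = 0 and x_1 ≥ x_2 ≥ … ≥ x_n}; that is, the cone C(m) restricted to the hyperplane of coordinate-sum zero equals the closed Weyl chamber. -/
open scoped BigOperators

/-- If `m ∈ E` is a highest point of `E` and every vector `m - (e_i - e_{i+1})` also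
belongs to `E`, then the cone `C(m)` restricted to the hyperplane of coordinate-sum
zero is exactly the closed Weyl chamber `{x : x_1 ≥ x_2 ≥ … ≥ x_n}`. -/
theorem highest_weight_cone_eq_weyl_chamber_of_simple_roots_occur
    {n : ℕ} (E : Finset (Fin (n + 1) → ℝ))
    (m : Fin (n + 1) → ℝ) (hm : m ∈ E) (hhigh : IsHighestPoint E m)
    (hroots : ∀ i : Fin n,
      m - (Pi.single i.castSucc (1 : ℝ) - Pi.single i.succ (1 : ℝ)) ∈ E) :
    {x : Fin (n + 1) → ℝ |
        (∑ i, x i = 0) ∧ ∀ N ∈ E, ∑ i, N i * x i ≤ ∑ i, m i * x i}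
      = {x : Fin (n + 1) → ℝ |
        (∑ i, x i = 0) ∧ ∀ i : Fin n, x i.succ ≤ x i.castSucc} := by
  have key : ∀ (x : Fin (n+1) → ℝ) (j : Fin n),
      ∑ i, ((Pi.single j.castSucc (1:ℝ) - Pi.single j.succ (1:ℝ) : Fin (n+1) → ℝ)) i * x i
        = x j.castSucc - x j.succ := by
    intro x j
    simp [sub_mul, Finset.sum_sub_distrib, Pi.single_apply, Finset.sum_ite_eq']
  ext x
  simp only [Set.mem_setOf_eq]
  constructor
  · rintro ⟨h0, hle⟩
    refine ⟨h0, fun j => ?_⟩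
    have h1 := hle _ (hroots j)
    have h2 : ∑ i, (m - (Pi.single j.castSucc (1:ℝ) - Pi.single j.succ (1:ℝ) : Fin (n+1) → ℝ)) i * x i
        = ∑ i, m i * x i - (x j.castSucc - x j.succ) := by
      simp [Pi.sub_apply, sub_mul, Finset.sum_sub_distrib, Pi.single_apply,
        Finset.sum_ite_eq']
    rw [h2] at h1
    linarith
  · rintro ⟨h0, hch⟩
    refine ⟨h0, fun N hN => ?_⟩
    obtain ⟨c, hc, hmN⟩ := hhigh N hN
    have h2 : ∑ i, m i * x i - ∑ i, N i * x i
        = ∑ j : Fin n, c j * (x j.castSucc - x j.succ) := by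
      have hmi : ∀ i, m i - N i
          = (∑ j : Fin n, c j • (Pi.single j.castSucc (1:ℝ) - Pi.single j.succ (1:ℝ) : Fin (n+1) → ℝ)) i := by
        intro i; rw [← hmN]; simp
      calc ∑ i, m i * x i - ∑ i, N i * x i
          = ∑ i, (m i - N i) * x i := by
            rw [← Finset.sum_sub_distrib]; simp [sub_mul]
        _ = ∑ i, (∑ j : Fin n, c j • (Pi.single j.castSucc (1:ℝ) - Pi.single j.succ (1:ℝ) : Fin (n+1) → ℝ)) i * x i :=
            Finset.sum_congr rfl fun i _ => by rw [hmi i]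
        _ = ∑ i, ∑ j : Fin n, c j * ((Pi.single j.castSucc (1:ℝ) - Pi.single j.succ (1:ℝ) : Fin (n+1) → ℝ) i * x i) := by
            refine Finset.sum_congr rfl fun i _ => ?_
            simp [Finset.sum_apply, Finset.sum_mul, mul_assoc]
        _ = ∑ j : Fin n, c j * (x j.castSucc - x j.succ) := by
            rw [Finset.sum_comm]
            refine Finset.sum_congr rfl fun j _ => ?_
            rw [← Finset.mul_sum, key x j]
    have hnn : 0 ≤ ∑ j : Fin n, c j * (x j.castSucc - x j.succ) :=
      Finset.sum_nonneg fun j _ => mul_nonneg (hc j) (by linarith [hch j])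
    linarith
end

section
/- Let E ⊆ ℝ^n be a finite set, invariant under the coordinate-permutation action of S_n, and let m ∈ E be a highest point of E. Then the cones C(σ·m), for σ ∈ S_n, cover ℝ^n: for every x ∈ ℝ^n there exists σ ∈ S_n with ⟨σ·m, x⟩ ≥ ⟨N, x⟩ for all N ∈ E. -/
open scoped BigOperators

/-- Key inner-product computation: pairing `m - N` with an antitone `y` is nonnegative. -/
lemma highest_dot_nonneg {n : ℕ} (m N : Fin (n + 1) → ℝ) (c : Fin n → ℝ)
    (hc : ∀ i, 0 ≤ c i)
    (h : m - N = ∑ i, c i • (Pi.single i.castSucc (1 : ℝ) - Pi.single i.succ (1 : ℝ)))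
    (y : Fin (n + 1) → ℝ) (hy : ∀ i : Fin n, y i.succ ≤ y i.castSucc) :
    ∑ j, N j * y j ≤ ∑ j, m j * y j := by
  have key : ∑ j, m j * y j - ∑ j, N j * y j
      = ∑ i : Fin n, c i * (y i.castSucc - y i.succ) := by
    have : ∀ j, m j - N j = ∑ i : Fin n,
        c i * (((Pi.single i.castSucc (1 : ℝ) - Pi.single i.succ (1 : ℝ)) : Fin (n+1) → ℝ) j) := by
      intro j
      have := congrFun h j
      simpa [Finset.sum_apply, Pi.smul_apply, smul_eq_mul] using this
    calc ∑ j, m j * y j - ∑ j, N j * y j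
        = ∑ j, (m j - N j) * y j := by
          rw [← Finset.sum_sub_distrib]; congr 1; ext j; ring
      _ = ∑ j, (∑ i : Fin n, c i *
            (((Pi.single i.castSucc (1 : ℝ) - Pi.single i.succ (1 : ℝ)) : Fin (n+1) → ℝ) j)) * y j := by
          congr 1; ext j; rw [this j]
      _ = ∑ i : Fin n, ∑ j, c i *
            (((Pi.single i.castSucc (1 : ℝ) - Pi.single i.succ (1 : ℝ)) : Fin (n+1) → ℝ) j) * y j := by
          rw [Finset.sum_comm]
          congr 1; ext j; rw [Finset.sum_mul]
      _ = ∑ i : Fin n, c i * (y i.castSucc - y i.succ) := by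
          congr 1; ext i
          have : ∀ j, c i * (((Pi.single i.castSucc (1 : ℝ) - Pi.single i.succ (1 : ℝ)) : Fin (n+1) → ℝ) j) * y j
              = c i * ((Pi.single i.castSucc (1 : ℝ) : Fin (n+1) → ℝ) j * y j)
                - c i * ((Pi.single i.succ (1 : ℝ) : Fin (n+1) → ℝ) j * y j) := by
            intro j; simp [Pi.sub_apply]; ring
          rw [Finset.sum_congr rfl fun j _ => this j, Finset.sum_sub_distrib,
            ← Finset.mul_sum, ← Finset.mul_sum]
          have h1 : ∑ j, (Pi.single i.castSucc (1 : ℝ) : Fin (n+1) → ℝ) j * y j = y i.castSucc := by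
            simp [Pi.single_apply, Finset.sum_ite_eq]
          have h2 : ∑ j, (Pi.single i.succ (1 : ℝ) : Fin (n+1) → ℝ) j * y j = y i.succ := by
            simp [Pi.single_apply, Finset.sum_ite_eq]
          rw [h1, h2]; ring
  have nonneg : 0 ≤ ∑ i : Fin n, c i * (y i.castSucc - y i.succ) :=
    Finset.sum_nonneg fun i _ => mul_nonneg (hc i) (sub_nonneg.2 (hy i))
  linarith [key]

/-- If `E` is a finite `S_n`-invariant set with highest point `m ∈ E`, then the cones
`C(σ·m)`, for `σ ∈ S_n`, cover `ℝ^n`: every `x` satisfies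
`⟨σ·m, x⟩ ≥ ⟨N, x⟩` for all `N ∈ E`, for some permutation `σ`. -/
theorem permuted_highest_weight_cones_cover
    {n : ℕ} (E : Finset (Fin (n + 1) → ℝ))
    (hperm : ∀ (σ : Equiv.Perm (Fin (n + 1))), ∀ N ∈ E, permVec σ N ∈ E)
    (m : Fin (n + 1) → ℝ) (hm : m ∈ E) (hhigh : IsHighestPoint E m) :
    ∀ x : Fin (n + 1) → ℝ, ∃ σ : Equiv.Perm (Fin (n + 1)),
      ∀ N ∈ E, ∑ i, N i * x i ≤ ∑ i, permVec σ m i * x i := by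
  intro x
  set τ : Equiv.Perm (Fin (n + 1)) := Tuple.sort (fun i => -x i) with hτ
  have hmono : Monotone ((fun i => -x i) ∘ τ) := Tuple.monotone_sort _
  set y : Fin (n + 1) → ℝ := fun j => x (τ j) with hy
  have hanti : ∀ i : Fin n, y i.succ ≤ y i.castSucc := by
    intro i
    have : (-x (τ i.castSucc)) ≤ (-x (τ i.succ)) :=
      hmono (le_of_lt (Fin.castSucc_lt_succ : i.castSucc < i.succ))
    simpa [hy] using neg_le_neg_iff.mp (by simpa using this)
  refine ⟨τ, fun N hN => ?_⟩
  -- rewrite both sides as sums over y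
  have hRHS : ∑ i, permVec τ m i * x i = ∑ j, m j * y j := by
    rw [← Equiv.sum_comp τ (fun i => permVec τ m i * x i)]
    simp [permVec, hy]
  have hLHS : ∑ i, N i * x i = ∑ j, (permVec τ⁻¹ N) j * y j := by
    rw [← Equiv.sum_comp τ (fun i => N i * x i)]
    simp [permVec, hy]
  rw [hRHS, hLHS]
  have hN' : permVec τ⁻¹ N ∈ E := hperm τ⁻¹ N hN
  obtain ⟨c, hc, hrep⟩ := hhigh _ hN'
  exact highest_dot_nonneg m _ c hc hrep y hanti
end
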